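/- Let Y = max(h₁, …, h_n) where h₁, …, h_n are i.i.d. standard exponential random variables, let h be a further standard exponential random variable independent of (h₁,…,h_n), and let 0 < β < 1 be a constant. Then E[ log(1 + Y/(β h)) ] ≤ −n log β / (1 − β). -/

import Mathlib

open MeasureTheory ProbabilityTheory Real Set

open Filter Topology
open scoped ENNReal NNReal

lemma aux_integral_exp_neg_mul_Ioi_zero {b : ℝ} (hb : 0 < b) :
    ∫ x in Ioi (0:ℝ), Real.exp (-(b*x)) = 1/b := by
  have hderiv : ∀ x ∈ Ici (0:ℝ),
      HasDerivAt (fun a => -Real.exp (-(b*a))/b) (Real.exp (-(b*x))) x := by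
    intro x _
    have h2 := (ProbabilityTheory.hasDerivAt_neg_exp_mul_exp (r := b) (x := x)).div_const b
    simpa [mul_div_assoc, mul_div_cancel_left₀ _ hb.ne'] using h2
  have hint : IntegrableOn (fun x : ℝ => Real.exp (-(b*x))) (Ioi 0) := by
    simpa [neg_mul] using exp_neg_integrableOn_Ioi 0 hb
  have htend : Tendsto (fun x : ℝ => -Real.exp (-(b*x))/b) atTop (𝓝 0) := by
    have h1 : Tendsto (fun x : ℝ => b*x) atTop atTop :=
      tendsto_id.const_mul_atTop hb
    have h2 : Tendsto (fun x : ℝ => -(b*x)) atTop atBot := tendsto_neg_atBot_iff.mpr h1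
    have h3 : Tendsto (fun x : ℝ => Real.exp (-(b*x))) atTop (𝓝 0) :=
      Real.tendsto_exp_atBot.comp h2
    simpa using (h3.neg).div_const b
  have := integral_Ioi_of_hasDerivAt_of_tendsto' hderiv hint htend
  rw [this]
  simp [neg_div]

lemma aux_expMeasure_Iic (a : ℝ) :
    expMeasure 1 (Iic a) = ENNReal.ofReal (if 0 ≤ a then 1 - Real.exp (-a) else 0) := by
  have h1 : expMeasure 1 (Iic a) = ∫⁻ y in Iic a, exponentialPDF 1 y := by
    rw [expMeasure, gammaMeasure, withDensity_apply _ measurableSet_Iic]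
    rfl
  rw [h1, lintegral_exponentialPDF_eq_antiDeriv one_pos]
  simp

lemma aux_expMeasure_Ioi {a : ℝ} (ha : 0 ≤ a) :
    expMeasure 1 (Ioi a) = ENNReal.ofReal (Real.exp (-a)) := by
  haveI : IsProbabilityMeasure (expMeasure 1) := isProbabilityMeasure_expMeasure one_pos
  have hc : (Iic a)ᶜ = Ioi a := compl_Iic
  have h2 := measure_compl (μ := expMeasure 1) (s := Iic a) measurableSet_Iic (measure_ne_top _ _)
  rw [hc, aux_expMeasure_Iic, if_pos ha] at h2
  rw [h2]
  have hle : Real.exp (-a) ≤ 1 := by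
    rw [← Real.exp_zero]
    exact Real.exp_le_exp.mpr (by linarith)
  rw [measure_univ, (show (1:ℝ≥0∞) = ENNReal.ofReal 1 by simp),
    ← ENNReal.ofReal_sub _ (by linarith : (0:ℝ) ≤ 1 - Real.exp (-a))]
  norm_num

lemma aux_prod_measure {c : ℝ} (hc : 0 ≤ c) :
    (expMeasure 1).prod (expMeasure 1) {p : ℝ × ℝ | c * p.1 < p.2}
      = ENNReal.ofReal (1/(1+c)) := by
  haveI : IsProbabilityMeasure (expMeasure 1) := isProbabilityMeasure_expMeasure one_pos
  have hs : MeasurableSet {p : ℝ × ℝ | c * p.1 < p.2} :=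
    measurableSet_lt (measurable_fst.const_mul c) measurable_snd
  rw [Measure.prod_apply hs]
  have hslice : ∀ x : ℝ, (Prod.mk x ⁻¹' {p : ℝ × ℝ | c * p.1 < p.2}) = Ioi (c*x) :=
    fun x => rfl
  simp_rw [hslice]
  have hmg : Measurable (fun x : ℝ => expMeasure 1 (Ioi (c*x))) := by
    have hant : Antitone (fun a : ℝ => expMeasure 1 (Ioi a)) :=
      fun a b hab => measure_mono (Ioi_subset_Ioi hab)
    exact hant.measurable.comp (measurable_const_mul c)
  have hpdf : Measurable (exponentialPDF 1) := by
    apply Measurable.ennreal_ofReal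
    exact measurable_exponentialPDFReal 1
  have h1 : ∫⁻ x, expMeasure 1 (Ioi (c*x)) ∂(expMeasure 1)
      = ∫⁻ x, (exponentialPDF 1 * fun x => expMeasure 1 (Ioi (c*x))) x := by
    rw [expMeasure, gammaMeasure]
    exact lintegral_withDensity_eq_lintegral_mul _ hpdf hmg
  rw [h1]
  have h2 : (exponentialPDF 1 * fun x => expMeasure 1 (Ioi (c*x)))
      = (Ici (0:ℝ)).indicator (fun x => ENNReal.ofReal (Real.exp (-((1+c)*x)))) := by
    funext x
    by_cases hx : 0 ≤ x
    · rw [indicator_of_mem (mem_Ici.mpr hx)]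
      simp only [Pi.mul_apply]
      rw [exponentialPDF_of_nonneg hx, aux_expMeasure_Ioi (mul_nonneg hc hx),
        ← ENNReal.ofReal_mul (by positivity)]
      rw [one_mul, ← Real.exp_add]
      ring_nf
    · rw [indicator_of_notMem (fun h => hx (mem_Ici.mp h))]
      simp only [Pi.mul_apply]
      rw [exponentialPDF_of_neg (lt_of_not_ge hx), zero_mul]
  rw [h2, lintegral_indicator measurableSet_Ici]
  have h1c : (0:ℝ) < 1 + c := by linarith
  have hint : IntegrableOn (fun x : ℝ => Real.exp (-((1+c)*x))) (Ici 0) := by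
    rw [integrableOn_Ici_iff_integrableOn_Ioi]
    have := exp_neg_integrableOn_Ioi 0 h1c
    apply this.congr_fun ?_ measurableSet_Ioi
    intro x _
    ring_nf
  rw [← ofReal_integral_eq_lintegral_ofReal hint
    (ae_of_all _ fun x => (Real.exp_pos _).le)]
  congr 1
  rw [integral_Ici_eq_integral_Ioi]
  exact aux_integral_exp_neg_mul_Ioi_zero h1c

lemma aux_main_integral {β : ℝ} (hβ₀ : 0 < β) (hβ₁ : β < 1) (n : ℕ) :
    IntegrableOn (fun t : ℝ => (n:ℝ)/(1-β+β*Real.exp t)) (Ioi 0) ∧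
    ∫ t in Ioi (0:ℝ), (n:ℝ)/(1-β+β*Real.exp t) = -(n:ℝ) * Real.log β / (1-β) := by
  set F : ℝ → ℝ := fun t => -((n:ℝ)/(1-β)) * Real.log ((1-β)*Real.exp (-t) + β) with hF
  have h1β : (0:ℝ) < 1 - β := by linarith
  have hupos : ∀ t : ℝ, 0 < (1-β)*Real.exp (-t) + β := by
    intro t
    have := Real.exp_pos (-t)
    nlinarith
  have hdpos : ∀ t : ℝ, 0 < 1 - β + β*Real.exp t := by
    intro t
    have := Real.exp_pos t
    nlinarith
  have hderiv : ∀ t ∈ Ici (0:ℝ),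
      HasDerivAt F ((n:ℝ)/(1-β+β*Real.exp t)) t := by
    intro t _
    have hu : HasDerivAt (fun t : ℝ => (1-β)*Real.exp (-t) + β)
        (-((1-β)*Real.exp (-t))) t := by
      have h0 : HasDerivAt (fun t : ℝ => Real.exp (-t)) (-Real.exp (-t)) t := by
        simpa using (hasDerivAt_neg t).exp
      simpa [mul_comm, mul_neg] using (h0.const_mul (1-β)).add_const β
    have hl := (hu.log (hupos t).ne').const_mul (-((n:ℝ)/(1-β)))
    refine HasDerivAt.congr_deriv hl ?_
    have het := Real.exp_pos t
    have hne := (hupos t).ne'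
    rw [Real.exp_neg] at hne ⊢
    field_simp
  have hnonneg : ∀ t ∈ Ioi (0:ℝ), 0 ≤ (n:ℝ)/(1-β+β*Real.exp t) := by
    intro t _
    exact div_nonneg (Nat.cast_nonneg n) (hdpos t).le
  have htend : Tendsto F atTop (𝓝 (-((n:ℝ)/(1-β)) * Real.log β)) := by
    have h2 : Tendsto (fun t : ℝ => (1-β)*Real.exp (-t) + β) atTop (𝓝 β) := by
      have h3 : Tendsto (fun t : ℝ => Real.exp (-t)) atTop (𝓝 0) :=
        Real.tendsto_exp_atBot.comp tendsto_neg_atTop_atBot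
      simpa using (h3.const_mul (1-β)).add_const β
    exact (((Real.continuousAt_log hβ₀.ne').tendsto.comp h2).const_mul _)
  have hint := integrableOn_Ioi_deriv_of_nonneg'
    (fun t ht => hderiv t ht) hnonneg htend
  refine ⟨hint, ?_⟩
  rw [integral_Ioi_of_hasDerivAt_of_nonneg' (fun t ht => hderiv t ht) hnonneg htend]
  have hF0 : F 0 = 0 := by
    simp [hF, Real.exp_zero, mul_one, sub_add_cancel]
  rw [hF0, sub_zero]
  field_simp


/-- Let `X 0, …, X (n-1), X n` be independent standard exponential random variables
(`expMeasure 1` has density `e^{-y}` on `[0,∞)`), let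
`Y = max (X 0, …, X (n-1))` and let `h = X n` (independent of the others), and let
`0 < β < 1`. Then `E[log(1 + Y/(β h))] ≤ −n log β / (1 − β)`. -/
theorem expected_log_rate_single_interferer_bound
    {Ω : Type*} [MeasurableSpace Ω] (μ : Measure Ω) [IsProbabilityMeasure μ]
    (n : ℕ) (hn : 0 < n) (X : Fin (n + 1) → Ω → ℝ)
    (hmeas : ∀ i, Measurable (X i))
    (hdist : ∀ i, Measure.map (X i) μ = expMeasure 1)
    (hindep : iIndepFun X μ)
    (β : ℝ) (hβ₀ : 0 < β) (hβ₁ : β < 1) :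
    (∫ ω, Real.log (1 +
        (Finset.univ.sup' (Finset.univ_nonempty_iff.mpr
            (Fin.pos_iff_nonempty.mp hn)) fun i : Fin n => X i.castSucc ω) /
          (β * X (Fin.last n) ω)) ∂μ) ≤
      -(n : ℝ) * Real.log β / (1 - β) := by
  have hne : (Finset.univ : Finset (Fin n)).Nonempty :=
    Finset.univ_nonempty_iff.mpr (Fin.pos_iff_nonempty.mp hn)
  show (∫ ω, Real.log (1 +
        (Finset.univ.sup' hne fun i : Fin n => X i.castSucc ω) /
          (β * X (Fin.last n) ω)) ∂μ) ≤ -(n : ℝ) * Real.log β / (1 - β)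
  set Y : Ω → ℝ := fun ω => Finset.univ.sup' hne fun i : Fin n => X i.castSucc ω with hYdef
  set Z : Ω → ℝ := fun ω => Real.log (1 + Y ω / (β * X (Fin.last n) ω)) with hZdef
  have h1β : (0:ℝ) < 1 - β := by linarith
  have hdpos : ∀ t : ℝ, 0 < 1 - β + β*Real.exp t := by
    intro t
    have := Real.exp_pos t
    nlinarith
  -- measurability
  have hYmeas : Measurable Y := by
    have h := Finset.measurable_sup' (s := (Finset.univ : Finset (Fin n))) hne
      (f := fun i : Fin n => X i.castSucc) (fun i _ => hmeas _)
    have heq : Finset.univ.sup' hne (fun i : Fin n => X i.castSucc) = Y := by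
      funext ω
      exact Finset.sup'_apply hne _ ω
    rwa [heq] at h
  have hZmeas : Measurable Z :=
    Real.measurable_log.comp (measurable_const.add (hYmeas.div ((hmeas _).const_mul β)))
  -- a.e. positivity of the variables
  have hnull : ∀ i, μ {ω | X i ω ≤ 0} = 0 := by
    intro i
    have he : {ω | X i ω ≤ 0} = X i ⁻¹' (Iic 0) := rfl
    rw [he, ← Measure.map_apply (hmeas i) measurableSet_Iic, hdist i, aux_expMeasure_Iic]
    simp
  have hG : ∀ᵐ ω ∂μ, ∀ i, 0 < X i ω := by
    rw [ae_all_iff]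
    intro i
    rw [ae_iff]
    simpa [not_lt] using hnull i
  have hYpos : ∀ ω, (∀ i, 0 < X i ω) → 0 < Y ω := by
    intro ω hω
    exact lt_of_lt_of_le (hω (⟨0, hn⟩ : Fin n).castSucc)
      (Finset.le_sup' (fun i : Fin n => X i.castSucc ω) (Finset.mem_univ ⟨0, hn⟩))
  have hZnn : 0 ≤ᵐ[μ] Z := by
    filter_upwards [hG] with ω hω
    have hY : 0 < Y ω := hYpos ω hω
    have hh : 0 < β * X (Fin.last n) ω := mul_pos hβ₀ (hω _)
    have h2 : (1:ℝ) ≤ 1 + Y ω / (β * X (Fin.last n) ω) := by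
      have := div_pos hY hh
      linarith
    exact Real.log_nonneg h2
  -- key tail bound
  have key : ∀ t ∈ Ioi (0:ℝ), μ {ω | t < Z ω}
      ≤ ENNReal.ofReal ((n:ℝ)/(1-β+β*Real.exp t)) := by
    intro t ht
    set c : ℝ := β * (Real.exp t - 1) with hcdef
    have hexp : (1:ℝ) ≤ Real.exp t := Real.one_le_exp (le_of_lt ht)
    have hc : 0 ≤ c := mul_nonneg hβ₀.le (by linarith)
    have hsingle : ∀ i : Fin n,
        μ {ω | c * X (Fin.last n) ω < X i.castSucc ω} = ENNReal.ofReal (1/(1+c)) := by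
      intro i
      have hne2 : (Fin.last n) ≠ (i.castSucc : Fin (n+1)) := (Fin.castSucc_lt_last i).ne'
      have hIndep : IndepFun (X (Fin.last n)) (X i.castSucc) μ := hindep.indepFun hne2
      have hmap : μ.map (fun ω => (X (Fin.last n) ω, X i.castSucc ω))
          = (expMeasure 1).prod (expMeasure 1) := by
        rw [(indepFun_iff_map_prod_eq_prod_map_map (hmeas _).aemeasurable
          (hmeas _).aemeasurable).mp hIndep, hdist, hdist]
      have hsetm : MeasurableSet {p : ℝ × ℝ | c * p.1 < p.2} :=
        measurableSet_lt (measurable_fst.const_mul c) measurable_snd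
      have he : {ω | c * X (Fin.last n) ω < X i.castSucc ω}
          = (fun ω => (X (Fin.last n) ω, X i.castSucc ω)) ⁻¹' {p : ℝ × ℝ | c * p.1 < p.2} :=
        rfl
      rw [he, ← Measure.map_apply ((hmeas _).prodMk (hmeas _)) hsetm, hmap,
        aux_prod_measure hc]
    have hmono : μ {ω | t < Z ω}
        ≤ μ (⋃ i : Fin n, {ω | c * X (Fin.last n) ω < X i.castSucc ω}) := by
      apply measure_mono_ae
      filter_upwards [hG] with ω hω
      intro hZ
      have hh : 0 < β * X (Fin.last n) ω := mul_pos hβ₀ (hω _)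
      have hY : 0 < Y ω := hYpos ω hω
      have harg : 0 < 1 + Y ω / (β * X (Fin.last n) ω) := by
        have := div_pos hY hh
        linarith
      have hZ' : t < Real.log (1 + Y ω / (β * X (Fin.last n) ω)) := hZ
      have h2 : Real.exp t < 1 + Y ω / (β * X (Fin.last n) ω) :=
        (Real.lt_log_iff_exp_lt harg).mp hZ'
      have h3 : (Real.exp t - 1) * (β * X (Fin.last n) ω) < Y ω := by
        rw [← lt_div_iff₀ hh]
        linarith
      have h4 : c * X (Fin.last n) ω < Y ω := by
        have hcc : c * X (Fin.last n) ω = (Real.exp t - 1) * (β * X (Fin.last n) ω) := by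
          rw [hcdef]; ring
        rw [hcc]; exact h3
      simp only [hYdef] at h4
      obtain ⟨i, _, hi⟩ := (Finset.lt_sup'_iff hne).mp h4
      exact mem_iUnion.mpr ⟨i, hi⟩
    calc μ {ω | t < Z ω}
        ≤ μ (⋃ i : Fin n, {ω | c * X (Fin.last n) ω < X i.castSucc ω}) := hmono
      _ ≤ ∑ i : Fin n, μ {ω | c * X (Fin.last n) ω < X i.castSucc ω} :=
          measure_iUnion_fintype_le _ _
      _ = (n : ℝ≥0∞) * ENNReal.ofReal (1/(1+c)) := by
          simp [hsingle, Finset.sum_const, Finset.card_univ]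
      _ = ENNReal.ofReal ((n:ℝ)/(1-β+β*Real.exp t)) := by
          rw [← ENNReal.ofReal_natCast n, ← ENNReal.ofReal_mul (Nat.cast_nonneg n)]
          congr 1
          rw [mul_one_div]
          congr 1
          rw [hcdef]; ring
  obtain ⟨hint, hval⟩ := aux_main_integral hβ₀ hβ₁ n
  have hV : 0 ≤ -(n:ℝ) * Real.log β / (1-β) := by
    apply div_nonneg _ h1β.le
    have := Real.log_nonpos hβ₀.le hβ₁.le
    nlinarith [Nat.cast_nonneg (α := ℝ) n]
  rw [integral_eq_lintegral_of_nonneg_ae hZnn hZmeas.aestronglyMeasurable,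
    lintegral_eq_lintegral_meas_lt μ hZnn hZmeas.aemeasurable]
  have hstep : ∫⁻ t in Ioi (0:ℝ), μ {a | t < Z a}
      ≤ ENNReal.ofReal (-(n:ℝ) * Real.log β / (1-β)) := by
    calc ∫⁻ t in Ioi (0:ℝ), μ {a | t < Z a}
        ≤ ∫⁻ t in Ioi (0:ℝ), ENNReal.ofReal ((n:ℝ)/(1-β+β*Real.exp t)) :=
          setLIntegral_mono' measurableSet_Ioi key
      _ = ENNReal.ofReal (∫ t in Ioi (0:ℝ), (n:ℝ)/(1-β+β*Real.exp t)) :=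
          (ofReal_integral_eq_lintegral_ofReal hint
            (ae_of_all _ fun t => div_nonneg (Nat.cast_nonneg n) (hdpos t).le)).symm
      _ = ENNReal.ofReal (-(n:ℝ) * Real.log β / (1-β)) := by rw [hval]
  calc (∫⁻ t in Ioi (0:ℝ), μ {a | t < Z a}).toReal
      ≤ (ENNReal.ofReal (-(n:ℝ) * Real.log β / (1-β))).toReal :=
        ENNReal.toReal_mono ENNReal.ofReal_ne_top hstep
    _ = -(n:ℝ) * Real.log β / (1-β) := ENNReal.toReal_ofReal hV
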